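/- Let F be a vertex-preserving endofunctor from directed graphs to clustering graphs (symmetric and transitive graphs). Then F satisfies the axiom of value (F(L2)=D2 and F(K2)=K2) if and only if F satisfies the extended axiom of value (F(Tn)=Dn and F(Kn)=Kn for all n), where Tn is the transitive line graph on vertices a1,…,an with arrows ai→aj for i<j. -/
import Mathlib


/-- A graph map between directed graphs (vertices `V`, arrow relation `E`):
it sends every arrow to an arrow or collapses it to a single vertex
(self-loops are implicitly present / handled by reflexivity). -/
def IsGraphMap {V W : Type} (E : V → V → Prop) (E' : W → W → Prop) (φ : V → W) : Prop :=
  ∀ x y, E x y → E' (φ x) (φ y) ∨ φ x = φ y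

/-- A vertex-preserving endofunctor on the category of finite directed graphs
(graphs are reflexive relations, since all self-loops are present; the functor
keeps the vertex set fixed and sends each graph map to itself). -/
structure GraphFunctor where
  obj : ∀ (V : Type) [Finite V], (V → V → Prop) → (V → V → Prop)
  refl : ∀ (V : Type) [Finite V] (E : V → V → Prop), Reflexive E → Reflexive (obj V E)
  map : ∀ (V W : Type) [Finite V] [Finite W] (E : V → V → Prop) (E' : W → W → Prop)
      (φ : V → W), Reflexive E → Reflexive E' →
      IsGraphMap E E' φ → IsGraphMap (obj V E) (obj W E') φ

/-- The two-vertex line graph `L2` : a single arrow `0 → 1` (plus self-loops). -/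
def L2rel : Fin 2 → Fin 2 → Prop := fun a b => a = b ∨ (a = 0 ∧ b = 1)

/-- The complete graph `K2` on two vertices. -/
def K2rel : Fin 2 → Fin 2 → Prop := fun _ _ => True

/-- The discrete graph `D2` on two vertices (only self-loops). -/
def D2rel : Fin 2 → Fin 2 → Prop := fun a b => a = b

/-- The transitive line graph Tn: arrows aᵢ → aⱼ for i ≤ j. -/
def TnRel (n : ℕ) : Fin n → Fin n → Prop := fun a b => a ≤ b

/-- The complete graph Kn. -/
def KnRel (n : ℕ) : Fin n → Fin n → Prop := fun _ _ => True

/-- The discrete graph Dn. -/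
def DnRel (n : ℕ) : Fin n → Fin n → Prop := fun a b => a = b

lemma L2rel_refl : Reflexive L2rel := fun a => Or.inl rfl
lemma K2rel_refl : Reflexive K2rel := fun _ => trivial
lemma TnRel_refl (n : ℕ) : Reflexive (TnRel n) := fun a => le_refl a
lemma KnRel_refl (n : ℕ) : Reflexive (KnRel n) := fun _ => trivial

lemma L2_eq_T2 : L2rel = TnRel 2 := by
  funext a b
  apply propext
  constructor
  · rintro (rfl | ⟨rfl, rfl⟩)
    · exact le_refl a
    · exact Fin.zero_le 1
  · intro h
    fin_cases a <;> fin_cases b <;> simp_all [L2rel, TnRel]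

lemma K2_eq_K2 : K2rel = KnRel 2 := rfl
lemma D2_eq_D2 : D2rel = DnRel 2 := rfl

/-- for a clustering-valued endofunctor F, the axiom of value
(F(L2)=D2 and F(K2)=K2) is equivalent to the extended axiom of value
(F(Tn)=Dn and F(Kn)=Kn for all n). -/
theorem axiom_of_value_iff_extended (F : GraphFunctor)
    (hclust : ∀ (V : Type) [Finite V] (E : V → V → Prop), Reflexive E →
        Symmetric (F.obj V E) ∧ Transitive (F.obj V E)) :
    (F.obj (Fin 2) L2rel = D2rel ∧ F.obj (Fin 2) K2rel = K2rel) ↔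
    (∀ n : ℕ, F.obj (Fin n) (TnRel n) = DnRel n ∧ F.obj (Fin n) (KnRel n) = KnRel n) := by
  constructor
  · rintro ⟨hL2, hK2⟩ n
    -- Key: no cross edges in F(Tn) for x < y
    have key : ∀ x y : Fin n, x < y → ¬ F.obj (Fin n) (TnRel n) x y := by
      intro x y hxy hF
      set ψ : Fin n → Fin 2 := fun i => if i ≤ x then 0 else 1 with hψ
      have hmap : IsGraphMap (TnRel n) L2rel ψ := by
        intro i j hij
        by_cases hi : i ≤ x
        · by_cases hj : j ≤ x
          · right; simp [hψ, hi, hj]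
          · left; simp only [hψ, if_pos hi, if_neg hj]
            exact Or.inr ⟨rfl, rfl⟩
        · have hj : ¬ j ≤ x := fun h => hi (le_trans hij h)
          right; simp [hψ, hi, hj]
      have := F.map (Fin n) (Fin 2) (TnRel n) L2rel ψ (TnRel_refl n) L2rel_refl hmap x y hF
      rw [hL2] at this
      have hx : ψ x = 0 := by simp [hψ]
      have hy : ψ y = 1 := by simp [hψ, not_le.mpr hxy]
      rcases this with h | h <;> · rw [hx, hy] at h; exact Fin.zero_ne_one h
    constructor
    · funext a b
      apply propext
      constructor
      · intro h
        rcases lt_trichotomy a b with hab | hab | hab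
        · exact absurd h (key a b hab)
        · exact hab
        · exact absurd ((hclust (Fin n) (TnRel n) (TnRel_refl n)).1 h) (key b a hab)
      · rintro rfl
        exact F.refl (Fin n) (TnRel n) (TnRel_refl n) a
    · funext a b
      apply propext
      constructor
      · intro _; trivial
      · intro _
        by_cases hab : a = b
        · subst hab; exact F.refl (Fin n) (KnRel n) (KnRel_refl n) a
        · set φ : Fin 2 → Fin n := fun i => if i = 0 then a else b with hφ
          have hmap : IsGraphMap K2rel (KnRel n) φ := by
            intro i j _; left; trivial
          have h01 : F.obj (Fin 2) K2rel 0 1 := by rw [hK2]; trivial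
          have := F.map (Fin 2) (Fin n) K2rel (KnRel n) φ K2rel_refl (KnRel_refl n) hmap 0 1 h01
          rcases this with h | h
          · simpa [hφ] using h
          · simp [hφ] at h; exact absurd h hab
  · intro h
    refine ⟨?_, ?_⟩
    · rw [L2_eq_T2, D2_eq_D2]; exact (h 2).1
    · rw [K2_eq_K2]; exact (h 2).2
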